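/- For any odd prime p, ∑_{k=0}^{p-1} (1/4^k) · ∑_{j=0}^{k} C(2j,j)·C(2k-2j,k-j)·(6j+1)·(6k-6j+1) ≡ p (mod p²). -/

import Mathlib

open Finset
set_option linter.unusedSectionVars false

section Aux
variable {K : Type*} [Field K] [CharZero K]

private def cb (K : Type*) [Field K] (j : ℕ) : K := ((2 * j).choose j : ℕ)

private lemma cb_key (i : ℕ) : ((i:K)+1) * cb K (i+1) = (4*(i:K)+2) * cb K i := by
  have h := congrArg (Nat.cast : ℕ → K) (Nat.succ_mul_centralBinom_succ i)
  simp only [Nat.centralBinom] at h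
  push_cast at h
  unfold cb
  linear_combination h

private lemma sum_reflect (k : ℕ) (f : ℕ → ℕ → K) :
    ∑ j ∈ range (k+1), f j (k-j) = ∑ j ∈ range (k+1), f (k-j) j := by
  rw [← Finset.sum_range_reflect (fun j => f (k-j) j) (k+1)]
  apply Finset.sum_congr rfl
  intro j hj
  have hj' : j ≤ k := Nat.lt_succ_iff.mp (Finset.mem_range.mp hj)
  have h1 : k+1-1-j = k-j := by omega
  simp only [h1, Nat.sub_sub_self hj']

private noncomputable def Ssum (K : Type*) [Field K] (k : ℕ) : K :=
  ∑ j ∈ range (k+1), cb K j * cb K (k-j)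
private noncomputable def Bsum (K : Type*) [Field K] (k : ℕ) : K :=
  ∑ j ∈ range (k+1), (j:K) * (cb K j * cb K (k-j))
private noncomputable def Csum (K : Type*) [Field K] (k : ℕ) : K :=
  ∑ j ∈ range (k+1), (j:K) * ((k-j : ℕ):K) * (cb K j * cb K (k-j))

private lemma B_eq (k : ℕ) : 2 * Bsum K k = (k:K) * Ssum K k := by
  have h2 : Bsum K k = ∑ j ∈ range (k+1), ((k-j : ℕ):K) * (cb K (k-j) * cb K j) :=
    sum_reflect k (fun a b => (a:K) * (cb K a * cb K b))
  rw [two_mul, Ssum, Finset.mul_sum]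
  nth_rewrite 2 [h2]
  rw [Bsum, ← Finset.sum_add_distrib]
  apply Finset.sum_congr rfl
  intro j hj
  have hj' : j ≤ k := Nat.lt_succ_iff.mp (Finset.mem_range.mp hj)
  rw [Nat.cast_sub hj']
  ring

private lemma Brev (k : ℕ) :
    ∑ j ∈ range (k+1), ((k-j : ℕ):K) * (cb K j * cb K (k-j)) = Bsum K k := by
  have := sum_reflect k (fun a b => (b:K) * (cb K a * cb K b))
  rw [this, Bsum]
  apply Finset.sum_congr rfl
  intro j hj
  ring

private lemma B_shift (k : ℕ) :
    Bsum K (k+1) = ∑ i ∈ range (k+1), (4*(i:K)+2) * (cb K i * cb K (k-i)) := by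
  rw [Bsum, Finset.sum_range_succ' (fun j => (j:K) * (cb K j * cb K (k+1-j))) (k+1)]
  simp only [Nat.cast_zero, zero_mul, add_zero]
  apply Finset.sum_congr rfl
  intro i hi
  have h1 : k+1-(i+1) = k-i := by omega
  simp only [h1]
  push_cast
  linear_combination (cb K (k-i)) * cb_key (K := K) i

private lemma A_val : ∀ k, Ssum K k = 4^k := by
  intro k
  induction k with
  | zero => simp [Ssum, cb]
  | succ k ih =>
    have hBs : Bsum K (k+1) = 4 * Bsum K k + 2 * Ssum K k := by
      rw [B_shift, Bsum, Ssum, Finset.mul_sum, Finset.mul_sum, ← Finset.sum_add_distrib]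
      apply Finset.sum_congr rfl
      intro j hj; ring
    have h1 := B_eq (K := K) (k+1)
    have h2 := B_eq (K := K) k
    have hne : ((k:K)+1) ≠ 0 := Nat.cast_add_one_ne_zero k
    have : ((k:K)+1) * Ssum K (k+1) = ((k:K)+1) * 4^(k+1) := by
      push_cast at h1
      linear_combination (-1:K)*h1 + 2*hBs + 4*h2 + (4*(k:K)+4)*ih
    exact mul_left_cancel₀ hne this


private lemma B_val (k : ℕ) : Bsum K k = (k:K) * 4^k / 2 := by
  have h := B_eq (K := K) k
  rw [A_val] at h
  field_simp
  linear_combination h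

private lemma C_shift (k : ℕ) :
    Csum K (k+1) = ∑ i ∈ range (k+1), (4*(i:K)+2) * (((k-i : ℕ):K) * (cb K i * cb K (k-i))) := by
  rw [Csum, Finset.sum_range_succ' (fun j => (j:K) * ((k+1-j : ℕ):K) * (cb K j * cb K (k+1-j))) (k+1)]
  simp only [Nat.cast_zero, zero_mul, add_zero]
  apply Finset.sum_congr rfl
  intro i hi
  have h1 : k+1-(i+1) = k-i := by omega
  simp only [h1]
  push_cast
  linear_combination ((k-i : ℕ):K) * (cb K (k-i)) * cb_key (K := K) i

private lemma C_val : ∀ k, Csum K k = (k:K) * ((k:K)-1) * 4^k / 8 := by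
  intro k
  induction k with
  | zero => simp [Csum]
  | succ k ih =>
    have hCs : Csum K (k+1) = 4 * Csum K k + 2 * Bsum K k := by
      rw [C_shift, Csum, ← Brev, Finset.mul_sum, Finset.mul_sum, ← Finset.sum_add_distrib]
      apply Finset.sum_congr rfl
      intro j hj; ring
    rw [hCs, ih, B_val]
    push_cast
    ring

private lemma inner_val (k : ℕ) :
    ∑ j ∈ range (k+1),
      (((2 * j).choose j : K) * ((2 * (k - j)).choose (k - j) : K) *
        ((6 * j + 1 : ℕ) : K) * ((6 * (k - j) + 1 : ℕ) : K)) =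
    4^k * (9*(k:K)^2 + 3*(k:K) + 2) / 2 := by
  have hsplit : ∀ j ∈ range (k+1),
      (((2 * j).choose j : K) * ((2 * (k - j)).choose (k - j) : K) *
        ((6 * j + 1 : ℕ) : K) * ((6 * (k - j) + 1 : ℕ) : K)) =
      36 * ((j:K) * ((k-j : ℕ):K) * (cb K j * cb K (k-j)))
      + 6 * ((j:K) * (cb K j * cb K (k-j)))
      + 6 * (((k-j : ℕ):K) * (cb K j * cb K (k-j)))
      + cb K j * cb K (k-j) := by
    intro j hj
    unfold cb
    push_cast
    ring
  rw [Finset.sum_congr rfl hsplit]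
  simp only [Finset.sum_add_distrib, ← Finset.mul_sum]
  rw [show (∑ j ∈ range (k+1), (j:K) * ((k-j : ℕ):K) * (cb K j * cb K (k-j))) = Csum K k from rfl,
      show (∑ j ∈ range (k+1), (j:K) * (cb K j * cb K (k-j))) = Bsum K k from rfl,
      Brev,
      show (∑ j ∈ range (k+1), cb K j * cb K (k-j)) = Ssum K k from rfl,
      C_val, B_val, A_val]
  ring

private lemma polysum : ∀ n : ℕ, ∑ k ∈ range n, (9*(k:K)^2 + 3*(k:K) + 2) / 2
    = ((n:K) * (3*(n:K)^2 - 3*(n:K) + 2)) / 2 := by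
  intro n
  induction n with
  | zero => simp
  | succ n ih =>
    rw [Finset.sum_range_succ, ih]
    push_cast
    ring

end Aux

theorem stmt17 (p : ℕ) [Fact p.Prime] (hodd : Odd p) :
    ‖(∑ k ∈ range p, (1 / 4 ^ k : ℚ_[p]) *
        ∑ j ∈ range (k + 1),
          (((2 * j).choose j : ℚ_[p]) * ((2 * (k - j)).choose (k - j) : ℚ_[p]) *
            ((6 * j + 1 : ℕ) : ℚ_[p]) * ((6 * (k - j) + 1 : ℕ) : ℚ_[p]))) -
      (p : ℚ_[p])‖ ≤ ((p : ℝ) ^ 2)⁻¹ := by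
  obtain ⟨m, hm⟩ := hodd
  have hterm : ∀ k ∈ range p, (1 / 4 ^ k : ℚ_[p]) *
      (∑ j ∈ range (k + 1),
          (((2 * j).choose j : ℚ_[p]) * ((2 * (k - j)).choose (k - j) : ℚ_[p]) *
            ((6 * j + 1 : ℕ) : ℚ_[p]) * ((6 * (k - j) + 1 : ℕ) : ℚ_[p]))) =
      (9*(k:ℚ_[p])^2 + 3*(k:ℚ_[p]) + 2) / 2 := by
    intro k _
    rw [inner_val]
    have h4 : (4:ℚ_[p])^k ≠ 0 := pow_ne_zero _ (by norm_num)
    field_simp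
  rw [Finset.sum_congr rfl hterm, polysum]
  have key : ((p:ℚ_[p]) * (3*(p:ℚ_[p])^2 - 3*(p:ℚ_[p]) + 2)) / 2 - (p:ℚ_[p])
      = (p:ℚ_[p])^2 * ((3*m : ℕ) : ℚ_[p]) := by
    have hp : (p:ℚ_[p]) = 2*(m:ℚ_[p])+1 := by exact_mod_cast congrArg (Nat.cast : ℕ → ℚ_[p]) hm
    push_cast [hp]
    ring
  rw [key, norm_mul, norm_pow, Padic.norm_p]
  have hc : ‖((3*m : ℕ) : ℚ_[p])‖ ≤ 1 := by
    simpa using Padic.norm_int_le_one (p := p) ((3*m : ℕ) : ℤ)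
  calc ((p:ℝ)⁻¹)^2 * ‖((3*m : ℕ) : ℚ_[p])‖ ≤ ((p:ℝ)⁻¹)^2 * 1 := by
        apply mul_le_mul_of_nonneg_left hc (by positivity)
    _ = ((p:ℝ)^2)⁻¹ := by rw [mul_one, inv_pow]
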